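/- Let H be a Hilbert space and P : B(H) → B(H) a unital completely positive idempotent (P ∘ P = P). Then the range R = P(B(H)), equipped with the product x ⊙ y := P(xy), the inherited involution, and the inherited norm, is a C*-algebra. -/

import Mathlib

/-- Positivity in a matrix algebra over a ⋆-ring: `m ≥ 0` iff `m = zᴴ * z` for some `z`.
(For matrices over a C*-algebra this is the usual C*-positivity.) -/
def MatPos {A : Type*} [NonUnitalRing A] [StarRing A] {n : ℕ}
    (m : Matrix (Fin n) (Fin n) A) : Prop :=
  ∃ z : Matrix (Fin n) (Fin n) A, m = z.conjTranspose * z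

/-- A linear map between ⋆-algebras is completely positive if it maps positive matrices to
positive matrices at every matrix level. -/
def IsCP {A B : Type*} [NonUnitalRing A] [StarRing A] [Module ℂ A]
    [NonUnitalRing B] [StarRing B] [Module ℂ B] (φ : A →ₗ[ℂ] B) : Prop :=
  ∀ (n : ℕ) (m : Matrix (Fin n) (Fin n) A), MatPos m → MatPos (m.map φ)

noncomputable section ChoiEffrosAux

variable {H : Type*} [NormedAddCommGroup H] [InnerProductSpace ℂ H] [CompleteSpace H]

namespace ChoiEffros

lemma matPos_star_entry {n : ℕ} {m : Matrix (Fin n) (Fin n) (H →L[ℂ] H)}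
    (h : MatPos m) (i j : Fin n) : m j i = star (m i j) := by
  obtain ⟨z, rfl⟩ := h
  simp [Matrix.mul_apply, Matrix.conjTranspose_apply, star_sum, star_mul, star_star]

lemma matPos_quad {n : ℕ} {m : Matrix (Fin n) (Fin n) (H →L[ℂ] H)}
    (h : MatPos m) (ξ : Fin n → H) :
    ∃ r : ℝ, 0 ≤ r ∧ ∑ i, ∑ j, (inner ℂ (ξ i) (m i j (ξ j)) : ℂ) = (r : ℂ) := by
  obtain ⟨z, rfl⟩ := h
  refine ⟨∑ k, ‖∑ j, z k j (ξ j)‖ ^ 2, by positivity, ?_⟩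
  have h1 : ∀ i j, (inner ℂ (ξ i) (((z.conjTranspose * z) i j) (ξ j)) : ℂ)
      = ∑ k, inner ℂ (z k i (ξ i)) (z k j (ξ j)) := by
    intro i j
    rw [Matrix.mul_apply, ContinuousLinearMap.sum_apply, inner_sum]
    refine Finset.sum_congr rfl fun k _ => ?_
    rw [Matrix.conjTranspose_apply, ContinuousLinearMap.mul_apply,
      ContinuousLinearMap.star_eq_adjoint, ContinuousLinearMap.adjoint_inner_right]
  simp_rw [h1]
  have h2 : ∑ i, ∑ j, ∑ k, (inner ℂ (z k i (ξ i)) (z k j (ξ j)) : ℂ)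
      = ∑ k, ∑ i, ∑ j, (inner ℂ (z k i (ξ i)) (z k j (ξ j)) : ℂ) := by
    rw [show ∑ i, ∑ j, ∑ k, (inner ℂ (z k i (ξ i)) (z k j (ξ j)) : ℂ)
        = ∑ i, ∑ k, ∑ j, (inner ℂ (z k i (ξ i)) (z k j (ξ j)) : ℂ) from
      Finset.sum_congr rfl fun i _ => Finset.sum_comm]
    exact Finset.sum_comm
  rw [h2]
  push_cast
  refine Finset.sum_congr rfl fun k _ => ?_
  have h3 : (inner ℂ (∑ j, z k j (ξ j)) (∑ j, z k j (ξ j)) : ℂ)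
      = ∑ i, ∑ j, (inner ℂ (z k i (ξ i)) (z k j (ξ j)) : ℂ) := by
    rw [sum_inner]
    exact Finset.sum_congr rfl fun i _ => inner_sum _ _ _
  rw [← h3, inner_self_eq_norm_sq_to_K]
  norm_cast

lemma conjT_mul (u v p q : H →L[ℂ] H) :
    (Matrix.of ![![u, v], ![p, q]]).conjTranspose * Matrix.of ![![u, v], ![p, q]]
    = Matrix.of ![![star u * u + star p * p, star u * v + star p * q],
        ![star v * u + star q * p, star v * v + star q * q]] := by
  ext i j
  fin_cases i <;> fin_cases j <;>
    simp [Matrix.mul_apply, Matrix.conjTranspose_apply, Fin.sum_univ_two]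

lemma map_of2 (P : (H →L[ℂ] H) →ₗ[ℂ] (H →L[ℂ] H)) (a b c d : H →L[ℂ] H) :
    (Matrix.of ![![a, b], ![c, d]]).map P = Matrix.of ![![P a, P b], ![P c, P d]] := by
  ext i j
  fin_cases i <;> fin_cases j <;> simp [Matrix.map_apply]

variable (P : (H →L[ℂ] H) →ₗ[ℂ] (H →L[ℂ] H))

lemma image_matPos (hPcp : IsCP P) (u v p q : H →L[ℂ] H) :
    MatPos ((Matrix.of ![![P (star u * u + star p * p), P (star u * v + star p * q)],
        ![P (star v * u + star q * p), P (star v * v + star q * q)]]) :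
      Matrix (Fin 2) (Fin 2) (H →L[ℂ] H)) := by
  have := hPcp 2 ((Matrix.of ![![u, v], ![p, q]]).conjTranspose * Matrix.of ![![u, v], ![p, q]])
    ⟨Matrix.of ![![u, v], ![p, q]], rfl⟩
  rwa [conjT_mul, map_of2] at this

lemma key_star (hPcp : IsCP P) (u v p q : H →L[ℂ] H) :
    P (star v * u + star q * p) = star (P (star u * v + star p * q)) := by
  have := matPos_star_entry (image_matPos P hPcp u v p q) 0 1
  simpa using this

lemma key_quad (hPcp : IsCP P) (u v p q : H →L[ℂ] H) (ξ₀ ξ₁ : H) :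
    ∃ r : ℝ, 0 ≤ r ∧
      (inner ℂ ξ₀ (P (star u * u + star p * p) ξ₀) + inner ℂ ξ₀ (P (star u * v + star p * q) ξ₁)
      + inner ℂ ξ₁ (P (star v * u + star q * p) ξ₀)
      + inner ℂ ξ₁ (P (star v * v + star q * q) ξ₁) : ℂ) = (r : ℂ) := by
  obtain ⟨r, hr, hsum⟩ := matPos_quad (image_matPos P hPcp u v p q) ![ξ₀, ξ₁]
  refine ⟨r, hr, ?_⟩
  rw [← hsum]
  simp [Fin.sum_univ_two]
  ring

lemma P_star (hPcp : IsCP P) (x : H →L[ℂ] H) : P (star x) = star (P x) := by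
  have := key_star P hPcp 1 x 0 0
  simpa using this

lemma pos_sqrt (T : H →L[ℂ] H) (hT : T.IsPositive) :
    ∃ s : H →L[ℂ] H, star s = s ∧ star s * s = T := by
  have h0 : (0 : H →L[ℂ] H) ≤ T := (ContinuousLinearMap.nonneg_iff_isPositive T).mpr hT
  refine ⟨CFC.sqrt T, (IsSelfAdjoint.of_nonneg (CFC.sqrt_nonneg T)).star_eq, ?_⟩
  rw [(IsSelfAdjoint.of_nonneg (CFC.sqrt_nonneg T)).star_eq, CFC.sqrt_mul_sqrt_self T h0]

lemma one_sub_pos (b : H →L[ℂ] H) (hb : ‖b‖ ≤ 1) : (1 - star b * b).IsPositive := by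
  constructor
  · rw [← ContinuousLinearMap.isSelfAdjoint_iff_isSymmetric]; simp [IsSelfAdjoint, star_sub, mul_comm]
  · intro η
    have h1 : ((1 - star b * b) : H →L[ℂ] H) η = η - star b (b η) := by
      simp [ContinuousLinearMap.mul_apply]
    rw [ContinuousLinearMap.reApplyInnerSelf_apply, h1, inner_sub_left]
    rw [ContinuousLinearMap.star_eq_adjoint, ContinuousLinearMap.adjoint_inner_left]
    simp only [map_sub]
    rw [inner_self_eq_norm_sq (𝕜 := ℂ)]
    have h2 : RCLike.re (inner ℂ (b η) (b η) : ℂ) = ‖b η‖ ^ 2 := inner_self_eq_norm_sq _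
    rw [h2]
    have h3 : ‖b η‖ ≤ ‖η‖ := by
      calc ‖b η‖ ≤ ‖b‖ * ‖η‖ := b.le_opNorm η
      _ ≤ 1 * ‖η‖ := by nlinarith [norm_nonneg η]
      _ = ‖η‖ := one_mul _
    nlinarith [norm_nonneg (b η), norm_nonneg η]

lemma inner_self_cast (w : H) : (inner ℂ w w : ℂ) = ((‖w‖ ^ 2 : ℝ) : ℂ) := by
  rw [inner_self_eq_norm_sq_to_K]; norm_cast

lemma contract_aux (hP1 : P 1 = 1) (hPcp : IsCP P) (b : H →L[ℂ] H) (hb : ‖b‖ ≤ 1)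
    (η : H) : ‖P b η‖ ≤ ‖η‖ := by
  obtain ⟨s, hs, hss⟩ := pos_sqrt _ (one_sub_pos b hb)
  obtain ⟨r, hr, hq⟩ := key_quad P hPcp 1 b 0 s (-(P b η)) η
  simp only [star_one, one_mul, star_zero, zero_mul, mul_one, add_zero, mul_zero,
    zero_add] at hq
  rw [hss, add_sub_cancel, hP1] at hq
  rw [P_star P hPcp b] at hq
  have t1 : (inner ℂ (-(P b η)) ((1 : H →L[ℂ] H) (-(P b η))) : ℂ) = ((‖P b η‖ ^ 2 : ℝ) : ℂ) := by
    rw [ContinuousLinearMap.one_apply, inner_self_cast, norm_neg]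
  have t2 : (inner ℂ (-(P b η)) (P b η) : ℂ) = -((‖P b η‖ ^ 2 : ℝ) : ℂ) := by
    rw [inner_neg_left, inner_self_cast]
  have t3 : (inner ℂ η ((star (P b)) (-(P b η))) : ℂ) = -((‖P b η‖ ^ 2 : ℝ) : ℂ) := by
    rw [ContinuousLinearMap.star_eq_adjoint, ContinuousLinearMap.adjoint_inner_right,
      inner_neg_right, inner_self_cast]
  have t4 : (inner ℂ η ((1 : H →L[ℂ] H) η) : ℂ) = ((‖η‖ ^ 2 : ℝ) : ℂ) := by
    rw [ContinuousLinearMap.one_apply, inner_self_cast]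
  rw [t1, t2, t3, t4] at hq
  have h' := congrArg Complex.re hq
  simp only [Complex.add_re, Complex.neg_re, Complex.ofReal_re] at h'
  nlinarith [norm_nonneg (P b η), norm_nonneg η, hr, h']

lemma contract (hP1 : P 1 = 1) (hPcp : IsCP P) (a : H →L[ℂ] H) : ‖P a‖ ≤ ‖a‖ := by
  rcases eq_or_ne a 0 with rfl | ha
  · simp
  · have hna : (0 : ℝ) < ‖a‖ := norm_pos_iff.mpr ha
    set b : H →L[ℂ] H := ((‖a‖ : ℂ))⁻¹ • a with hbdef
    have hb : ‖b‖ ≤ 1 := by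
      rw [hbdef, norm_smul]
      simp only [norm_inv, Complex.norm_real, norm_norm]
      rw [inv_mul_cancel₀ hna.ne']
    have hab : a = ((‖a‖ : ℂ)) • b := by
      rw [hbdef, smul_smul, mul_inv_cancel₀ (by exact_mod_cast hna.ne'), one_smul]
    have hPb : ‖P b‖ ≤ 1 :=
      ContinuousLinearMap.opNorm_le_bound _ zero_le_one fun η => by
        rw [one_mul]; exact contract_aux P hP1 hPcp b hb η
    have hPa : P a = ((‖a‖ : ℂ)) • P b := by rw [← map_smul, ← hab]
    calc ‖P a‖ = ‖a‖ * ‖P b‖ := by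
          rw [hPa, norm_smul]
          simp
      _ ≤ ‖a‖ * 1 := by nlinarith
      _ = ‖a‖ := mul_one _
    
lemma schwarz (hP1 : P 1 = 1) (hPcp : IsCP P) (x : H →L[ℂ] H) (hx : P x = x) (η : H) :
    ∃ r : ℝ, 0 ≤ r ∧ (inner ℂ η ((P (star x * x)) η) : ℂ) = (‖x η‖ ^ 2 : ℝ) + (r : ℝ) := by
  obtain ⟨r, hr, hq⟩ := key_quad P hPcp 1 x 0 0 (-(x η)) η
  simp only [star_one, one_mul, star_zero, zero_mul, mul_one, add_zero, mul_zero,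
    zero_add] at hq
  rw [hP1, hx, P_star P hPcp x, hx] at hq
  have t1 : (inner ℂ (-(x η)) ((1 : H →L[ℂ] H) (-(x η))) : ℂ) = ((‖x η‖ ^ 2 : ℝ) : ℂ) := by
    rw [ContinuousLinearMap.one_apply, inner_self_cast, norm_neg]
  have t2 : (inner ℂ (-(x η)) (x η) : ℂ) = -((‖x η‖ ^ 2 : ℝ) : ℂ) := by
    rw [inner_neg_left, inner_self_cast]
  have t3 : (inner ℂ η ((star x) (-(x η))) : ℂ) = -((‖x η‖ ^ 2 : ℝ) : ℂ) := by
    rw [ContinuousLinearMap.star_eq_adjoint, ContinuousLinearMap.adjoint_inner_right,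
      inner_neg_right, inner_self_cast]
  rw [t1, t2, t3] at hq
  exact ⟨r, hr, by linear_combination hq⟩

lemma dpos (hP1 : P 1 = 1) (hPcp : IsCP P) (x : H →L[ℂ] H) (hx : P x = x) :
    (P (star x * x) - star x * x).IsPositive := by
  constructor
  · have h1 : star (P (star x * x)) = P (star x * x) := by
      rw [← P_star P hPcp, star_mul, star_star]
    rw [← ContinuousLinearMap.isSelfAdjoint_iff_isSymmetric]
    show star (P (star x * x) - star x * x) = _
    rw [star_sub, h1, star_mul, star_star]
  · intro η
    obtain ⟨r, hr, hs⟩ := schwarz P hP1 hPcp x hx η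
    rw [ContinuousLinearMap.reApplyInnerSelf_apply]
    have hval : (inner ℂ η ((P (star x * x) - star x * x) η) : ℂ) = (r : ℂ) := by
      rw [ContinuousLinearMap.sub_apply, inner_sub_right, hs,
        ContinuousLinearMap.mul_apply, ContinuousLinearMap.star_eq_adjoint,
        ContinuousLinearMap.adjoint_inner_right, inner_self_cast]
      ring
    have hconj : (inner ℂ ((P (star x * x) - star x * x) η) η : ℂ)
        = (starRingEnd ℂ) (inner ℂ η ((P (star x * x) - star x * x) η) : ℂ) :=
      (inner_conj_symm _ _).symm
    rw [hconj, hval, Complex.conj_ofReal]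
    simpa using hr

lemma kernelL (hP1 : P 1 = 1) (hPcp : IsCP P) (hPidem : ∀ x, P (P x) = P x)
    (x : H →L[ℂ] H) (hx : P x = x) (c : H →L[ℂ] H) :
    P ((P (star x * x) - star x * x) * c) = 0 := by
  set T : H →L[ℂ] H := P (star x * x) - star x * x with hT
  have hPT : P T = 0 := by rw [hT, map_sub, hPidem, sub_self]
  obtain ⟨s, hs, hss⟩ := pos_sqrt T (dpos P hP1 hPcp x hx)
  set a : H →L[ℂ] H := P (T * c) with ha
  have hTc : star s * (s * c) = T * c := by rw [← mul_assoc, hss]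
  have hstar3 : P (star (s * c) * s) = star a := by
    have h := key_star P hPcp s (s * c) 0 0
    simp only [star_zero, zero_mul, mul_zero, add_zero] at h
    rw [h, hTc]
  show a = 0
  ext η
  rw [ContinuousLinearMap.zero_apply, ← norm_eq_zero]
  by_contra hne
  have hpos : 0 < ‖a η‖ ^ 2 := by positivity
  set C : ℝ := (inner ℂ η ((P (star (s * c) * (s * c))) η) : ℂ).re with hC
  have main : ∀ t : ℝ, 2 * t * ‖a η‖ ^ 2 ≤ C := by
    intro t
    obtain ⟨r, hr, hq⟩ := key_quad P hPcp s (s * c) 0 0 (-((t : ℂ) • (a η))) η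
    simp only [star_zero, zero_mul, mul_zero, add_zero] at hq
    rw [hss, hTc, hPT, hstar3] at hq
    have t1 : (inner ℂ (-((t : ℂ) • (a η))) ((0 : H →L[ℂ] H) (-((t : ℂ) • (a η)))) : ℂ) = 0 := by
      simp
    have t2 : (inner ℂ (-((t : ℂ) • (a η))) (a η) : ℂ) = -((t : ℝ) : ℂ) * ((‖a η‖ ^ 2 : ℝ) : ℂ) := by
      rw [inner_neg_left, inner_smul_left, inner_self_cast, Complex.conj_ofReal]
      ring
    have t3 : (inner ℂ η ((star a) (-((t : ℂ) • (a η)))) : ℂ)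
        = -((t : ℝ) : ℂ) * ((‖a η‖ ^ 2 : ℝ) : ℂ) := by
      rw [ContinuousLinearMap.star_eq_adjoint, ContinuousLinearMap.adjoint_inner_right,
        inner_neg_right, inner_smul_right, inner_self_cast]
      ring
    rw [t1, t2, t3] at hq
    have h' := congrArg Complex.re hq
    simp only [Complex.add_re, Complex.neg_re, Complex.mul_re, Complex.ofReal_re,
      Complex.ofReal_im, Complex.zero_re, Complex.neg_im, Complex.zero_im] at h'
    rw [← hC] at h'
    nlinarith [hr, h']
  have hcontr := main ((C + 1) / (2 * ‖a η‖ ^ 2))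
  have heq : 2 * ((C + 1) / (2 * ‖a η‖ ^ 2)) * ‖a η‖ ^ 2 = C + 1 := by
    field_simp
  rw [heq] at hcontr
  linarith

lemma Dzero (hP1 : P 1 = 1) (hPcp : IsCP P) (hPidem : ∀ x, P (P x) = P x)
    (a b : H →L[ℂ] H) (hA : P a = a) (hB : P b = b) (c : H →L[ℂ] H) :
    P ((P (a * b) - a * b) * c) = 0 := by
  have hsa : P (star a) = star a := by rw [P_star P hPcp, hA]
  have hsb : P (star b) = star b := by rw [P_star P hPcp, hB]
  set E : H →L[ℂ] H := P (a * b) - a * b with hE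
  set F : H →L[ℂ] H := P (star b * star a) - star b * star a with hF
  set D1 : H →L[ℂ] H := P (a * star a) - a * star a with hD1
  set D3 : H →L[ℂ] H := P (star b * b) - star b * b with hD3
  have k2 : P (D1 * c) = 0 := by
    have := kernelL P hP1 hPcp hPidem (star a) hsa c
    rwa [star_star] at this
  have k3 : P (D3 * c) = 0 := kernelL P hP1 hPcp hPidem b hB c
  have h1 : P (E * c) + P (F * c) = 0 := by
    have hx1 : P (star a + b) = star a + b := by rw [map_add, hsa, hB]
    have k1 := kernelL P hP1 hPcp hPidem (star a + b) hx1 c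
    have expand1 : star (star a + b) * (star a + b)
        = a * star a + a * b + star b * star a + star b * b := by
      rw [star_add, star_star]
      noncomm_ring
    rw [expand1] at k1
    have hdefect : P (a * star a + a * b + star b * star a + star b * b)
        - (a * star a + a * b + star b * star a + star b * b)
        = D1 + E + F + D3 := by
      simp only [map_add, hD1, hE, hF, hD3]
      abel
    rw [hdefect] at k1
    have : (D1 + E + F + D3) * c = D1 * c + E * c + F * c + D3 * c := by noncomm_ring
    rw [this, map_add, map_add, map_add, k2, k3] at k1
    simpa using k1
  have h2 : P (E * c) = P (F * c) := by
    have hx2 : P (star a + Complex.I • b) = star a + Complex.I • b := by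
      rw [map_add, map_smul, hsa, hB]
    have k1 := kernelL P hP1 hPcp hPidem (star a + Complex.I • b) hx2 c
    have expand2 : star (star a + Complex.I • b) * (star a + Complex.I • b)
        = a * star a + Complex.I • (a * b) + (-Complex.I) • (star b * star a)
          + star b * b := by
      rw [star_add, star_star, star_smul]
      simp only [RCLike.star_def, Complex.conj_I]
      simp only [add_mul, mul_add, smul_add, smul_mul_assoc, mul_smul_comm, smul_smul,
        neg_mul, mul_neg, neg_smul, smul_neg, Complex.I_mul_I, neg_neg, one_smul]
      abel
    rw [expand2] at k1
    have hdefect : P (a * star a + Complex.I • (a * b) + (-Complex.I) • (star b * star a)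
          + star b * b)
        - (a * star a + Complex.I • (a * b) + (-Complex.I) • (star b * star a)
          + star b * b)
        = D1 + (Complex.I • E + (-Complex.I) • F) + D3 := by
      simp only [map_add, map_smul, hD1, hE, hF, hD3, smul_sub]
      abel
    rw [hdefect] at k1
    have : (D1 + (Complex.I • E + (-Complex.I) • F) + D3) * c
        = D1 * c + (Complex.I • (E * c) + (-Complex.I) • (F * c)) + D3 * c := by
      simp only [add_mul, smul_mul_assoc]
    rw [this, map_add, map_add, map_add, map_smul, map_smul, k2, k3] at k1
    have k1' : Complex.I • (P (E * c) - P (F * c)) = 0 := by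
      rw [smul_sub]
      simpa [neg_smul, sub_eq_add_neg] using k1
    have := smul_eq_zero.mp k1'
    rcases this with h | h
    · exact absurd h Complex.I_ne_zero
    · exact sub_eq_zero.mp h
  have h3 : P (E * c) + P (E * c) = 0 := by
    nth_rewrite 2 [h2]
    exact h1
  have h4 : (2 : ℂ) • P (E * c) = 0 := by
    rw [two_smul]
    exact h3
  rcases smul_eq_zero.mp h4 with h | h
  · norm_num at h
  · exact h

lemma DzeroR (hP1 : P 1 = 1) (hPcp : IsCP P) (hPidem : ∀ x, P (P x) = P x)
    (a b : H →L[ℂ] H) (hA : P a = a) (hB : P b = b) (c : H →L[ℂ] H) :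
    P (c * (P (a * b) - a * b)) = 0 := by
  have hsa : P (star a) = star a := by rw [P_star P hPcp, hA]
  have hsb : P (star b) = star b := by rw [P_star P hPcp, hB]
  have hG : star (P (star b * star a) - star b * star a) = P (a * b) - a * b := by
    simp only [star_sub, star_mul, star_star, ← P_star P hPcp]
  have h := Dzero P hP1 hPcp hPidem (star b) (star a) hsb hsa (star c)
  have h2 := congrArg star h
  rw [star_zero, ← P_star P hPcp, star_mul, star_star, hG] at h2
  exact h2

end ChoiEffros
end ChoiEffrosAux

/-- **Choi–Effros.** Let `P : B(H) → B(H)` be a unital completely positive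
idempotent.  Then the range `R = P(B(H))`, with product `x ⊙ y := P (x * y)`, the inherited
involution and norm, is a C*-algebra: `R` is a closed star-closed subspace on which `⊙` is
associative, submultiplicative, satisfies `star (x ⊙ y) = star y ⊙ star x` and the
C*-identity `‖star x ⊙ x‖ = ‖x‖ ^ 2`. -/
theorem choiEffros_range_is_CStarAlgebra
    {H : Type*} [NormedAddCommGroup H] [InnerProductSpace ℂ H] [CompleteSpace H]
    (P : (H →L[ℂ] H) →ₗ[ℂ] (H →L[ℂ] H))
    (hP1 : P 1 = 1) (hPcp : IsCP P) (hPidem : ∀ x, P (P x) = P x) :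
    IsClosed ((LinearMap.range P : Submodule ℂ (H →L[ℂ] H)) : Set (H →L[ℂ] H)) ∧
    (∀ x ∈ LinearMap.range P, star x ∈ LinearMap.range P) ∧
    (∀ x ∈ LinearMap.range P, ∀ y ∈ LinearMap.range P, ∀ z ∈ LinearMap.range P,
      P (P (x * y) * z) = P (x * P (y * z))) ∧
    (∀ x ∈ LinearMap.range P, ∀ y ∈ LinearMap.range P,
      star (P (x * y)) = P (star y * star x)) ∧
    (∀ x ∈ LinearMap.range P, ∀ y ∈ LinearMap.range P, ‖P (x * y)‖ ≤ ‖x‖ * ‖y‖) ∧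
    (∀ x ∈ LinearMap.range P, ‖P (star x * x)‖ = ‖x‖ ^ 2) := by
  have hfix : ∀ x : H →L[ℂ] H, x ∈ LinearMap.range P → P x = x := by
    rintro x ⟨y, rfl⟩
    exact hPidem y
  refine ⟨?_, ?_, ?_, ?_, ?_, ?_⟩
  · -- closedness
    set Pc : (H →L[ℂ] H) →L[ℂ] (H →L[ℂ] H) :=
      LinearMap.mkContinuous P 1 (fun a => by simpa using ChoiEffros.contract P hP1 hPcp a) with hPc
    have hset : ((LinearMap.range P : Submodule ℂ (H →L[ℂ] H)) : Set (H →L[ℂ] H))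
        = {x | Pc x = x} := by
      ext x
      constructor
      · intro hx
        exact hfix x hx
      · intro hx
        exact ⟨x, hx⟩
    rw [hset]
    exact isClosed_eq Pc.continuous continuous_id
  · -- star closed
    intro x hx
    exact ⟨star x, by rw [ChoiEffros.P_star P hPcp, hfix x hx]⟩
  · -- associativity
    intro x hx y hy z hz
    have hX := hfix x hx
    have hY := hfix y hy
    have hZ := hfix z hz
    have h1 : P (P (x * y) * z) = P (x * y * z) := by
      have h := ChoiEffros.Dzero P hP1 hPcp hPidem x y hX hY z
      rw [sub_mul, map_sub, sub_eq_zero] at h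
      exact h
    have h2 : P (x * P (y * z)) = P (x * (y * z)) := by
      have h := ChoiEffros.DzeroR P hP1 hPcp hPidem y z hY hZ x
      rw [mul_sub, map_sub, sub_eq_zero] at h
      exact h
    rw [h1, h2, mul_assoc]
  · -- star identity
    intro x _ y _
    rw [← ChoiEffros.P_star P hPcp, star_mul]
  · -- submultiplicativity
    intro x _ y _
    exact le_trans (ChoiEffros.contract P hP1 hPcp (x * y)) (norm_mul_le x y)
  · -- C* identity
    intro x hx
    have hX := hfix x hx
    set N : ℝ := ‖P (star x * x)‖ with hN
    have hN0 : 0 ≤ N := norm_nonneg _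
    have hb : ∀ η : H, ‖x η‖ ^ 2 ≤ N * ‖η‖ ^ 2 := by
      intro η
      obtain ⟨r, hr, hs⟩ := ChoiEffros.schwarz P hP1 hPcp x hX η
      have h1 : ‖x η‖ ^ 2 + r = (inner ℂ η ((P (star x * x)) η) : ℂ).re := by
        rw [hs]
        simp [← Complex.ofReal_pow]
      have h2 : (inner ℂ η ((P (star x * x)) η) : ℂ).re
          ≤ ‖(inner ℂ η ((P (star x * x)) η) : ℂ)‖ := Complex.re_le_norm _
      have h3 : ‖(inner ℂ η ((P (star x * x)) η) : ℂ)‖ ≤ ‖η‖ * ‖(P (star x * x)) η‖ :=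
        norm_inner_le_norm _ _
      have h4 : ‖(P (star x * x)) η‖ ≤ N * ‖η‖ := (P (star x * x)).le_opNorm η
      nlinarith [norm_nonneg η]
    refine le_antisymm ?_ ?_
    · calc ‖P (star x * x)‖ ≤ ‖star x * x‖ := ChoiEffros.contract P hP1 hPcp _
        _ = ‖x‖ * ‖x‖ := CStarRing.norm_star_mul_self
        _ = ‖x‖ ^ 2 := (sq ‖x‖).symm
    · have hxn : ‖x‖ ≤ Real.sqrt N := by
        refine ContinuousLinearMap.opNorm_le_bound x (Real.sqrt_nonneg _) fun η => ?_
        have hsq : (Real.sqrt N * ‖η‖) ^ 2 = N * ‖η‖ ^ 2 := by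
          rw [mul_pow, Real.sq_sqrt hN0]
        nlinarith [hb η, norm_nonneg (x η), norm_nonneg η, Real.sqrt_nonneg N,
          mul_nonneg (Real.sqrt_nonneg N) (norm_nonneg η)]
      calc ‖x‖ ^ 2 ≤ Real.sqrt N ^ 2 := by nlinarith [norm_nonneg x]
        _ = N := Real.sq_sqrt hN0
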